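/- Let d ≥ 1 be fixed and define P(β) = 1 / (1 + dβ − d((1+dβ)/(1+d))^{(d+1)/d}) for β ∈ [0,1]. Then P is well-defined (the denominator is positive) and strictly decreasing on [0,1], with P(1) = 1. -/

import Mathlib

open Real

/-- The PoA expression P(β) = 1/(1+dβ−d((1+dβ)/(1+d))^{(d+1)/d}) is
well-defined (positive denominator) and strictly decreasing on [0,1], with
P(1) = 1. -/
theorem stmt10
    (d : ℕ) (hd : 1 ≤ d)
    (P : ℝ → ℝ)
    (hP : ∀ β : ℝ, P β = 1 / (1 + d * β -
        d * (((1 + d * β) / (1 + d)) ^ (((d : ℝ) + 1) / d)))) :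
    (∀ β ∈ Set.Icc (0 : ℝ) 1,
        0 < 1 + d * β - d * (((1 + d * β) / (1 + d)) ^ (((d : ℝ) + 1) / d))) ∧
    StrictAntiOn P (Set.Icc (0 : ℝ) 1) ∧
    P 1 = 1 := by
  have hd1 : (1:ℝ) ≤ (d:ℝ) := by exact_mod_cast hd
  have hdpos : (0:ℝ) < (d:ℝ) := lt_of_lt_of_le one_pos hd1
  have h1d : (0:ℝ) < 1 + (d:ℝ) := by linarith
  have h1dne : (1 + (d:ℝ)) ≠ 0 := ne_of_gt h1d
  set p : ℝ := ((d:ℝ)+1)/d with hp_def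
  have hp1 : 1 < p := by
    rw [hp_def, lt_div_iff₀ hdpos]; linarith
  have hppos : 0 < p := lt_trans one_pos hp1
  have hpm1 : p - 1 = 1/(d:ℝ) := by
    rw [hp_def]; field_simp; ring
  have hdp : (d:ℝ) * p = (d:ℝ)+1 := by
    rw [hp_def]; field_simp
  clear_value p
  set f : ℝ → ℝ := fun x => (1+(d:ℝ))*x - d * x^p with hf_def
  have hderiv : ∀ x ∈ Set.Ioo (0:ℝ) 1,
      HasDerivAt f ((1+(d:ℝ))*(1 - x^(1/(d:ℝ)))) x := by
    intro x hx
    have h1 : HasDerivAt (fun y : ℝ => y ^ p) (p * x ^ (p-1)) x :=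
      Real.hasDerivAt_rpow_const (Or.inl (ne_of_gt hx.1))
    have h2 := ((hasDerivAt_id x).const_mul (1+(d:ℝ))).sub (h1.const_mul (d:ℝ))
    refine h2.congr_deriv ?_
    rw [hpm1]
    linear_combination (-(x ^ (1/(d:ℝ)))) * hdp
  have hcont : ContinuousOn f (Set.Icc (0:ℝ) 1) := by
    intro x _
    exact ((continuousAt_const.mul continuousAt_id).sub
      (continuousAt_const.mul
        (Real.continuousAt_rpow_const x p (Or.inr hppos.le)))).continuousWithinAt
  have hmono : StrictMonoOn f (Set.Icc (0:ℝ) 1) := by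
    apply strictMonoOn_of_deriv_pos (convex_Icc 0 1) hcont
    intro x hx
    rw [interior_Icc] at hx
    rw [(hderiv x hx).deriv]
    have hx1 : x^(1/(d:ℝ)) < 1 :=
      Real.rpow_lt_one hx.1.le hx.2 (by positivity)
    nlinarith
  have hf0 : f 0 = 0 := by
    simp [hf_def, Real.zero_rpow (ne_of_gt hppos)]
  have hden : ∀ β : ℝ,
      1 + (d:ℝ) * β - d * (((1 + d * β) / (1 + d)) ^ p)
        = f ((1 + (d:ℝ) * β) / (1 + d)) := by
    intro β
    have hy : (1+(d:ℝ)) * ((1 + (d:ℝ)*β)/(1+d)) = 1 + (d:ℝ)*β := by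
      field_simp
    simp only [hf_def]
    rw [hy]
  have hx01 : ∀ β ∈ Set.Icc (0:ℝ) 1,
      (1+(d:ℝ)*β)/(1+d) ∈ Set.Icc (0:ℝ) 1 := by
    intro β hβ
    obtain ⟨hb0, hb1⟩ := hβ
    constructor
    · apply div_nonneg _ h1d.le
      nlinarith
    · rw [div_le_one h1d]
      nlinarith
  have hxpos : ∀ β : ℝ, 0 ≤ β → 0 < (1+(d:ℝ)*β)/(1+d) := by
    intro β hb
    apply div_pos _ h1d
    nlinarith
  have hDpos : ∀ β ∈ Set.Icc (0:ℝ) 1,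
      0 < 1 + (d:ℝ) * β - d * (((1 + d * β) / (1 + d)) ^ p) := by
    intro β hβ
    rw [hden β]
    have h0mem : (0:ℝ) ∈ Set.Icc (0:ℝ) 1 := by constructor <;> norm_num
    have := hmono h0mem (hx01 β hβ) (hxpos β hβ.1)
    linarith [hf0 ▸ this]
  refine ⟨hDpos, ?_, ?_⟩
  · intro a ha b hb hab
    rw [hP a, hP b]
    have hga : (1+(d:ℝ)*a)/(1+d) < (1+(d:ℝ)*b)/(1+d) := by
      rw [div_lt_div_iff_of_pos_right h1d]
      nlinarith
    have hlt : f ((1+(d:ℝ)*a)/(1+d)) < f ((1+(d:ℝ)*b)/(1+d)) :=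
      hmono (hx01 a ha) (hx01 b hb) hga
    rw [hden a, hden b]
    exact one_div_lt_one_div_of_lt ((hden a) ▸ hDpos a ha) hlt
  · rw [hP 1]
    have h1 : ((1 + (d:ℝ)*1)/(1+d)) = 1 := by
      rw [mul_one, div_self h1dne]
    rw [h1, Real.one_rpow]
    norm_num
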